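/- Let A > 0 and L ∈ ℝ, and let Φ : [0,∞) → ℝ be C¹ on [0,∞) and twice differentiable on (0,∞), satisfying the differential inequality −2·Φ'(t) ≤ A·Φ''(t) for all t > 0, together with Φ(t) → L and Φ'(t) → 0 as t → ∞. Then Φ(0) − L ≤ −(A/2)·Φ'(0). -/

import Mathlib

open Set Filter

/-- The calculus lemma behind the paper's proofs of the Poincaré–Lichnerowicz and
logarithmic Sobolev inequalities: if `Φ` is `C¹` on `[0,∞)`, twice differentiable on
`(0,∞)`, satisfies `−2Φ' ≤ A·Φ''` on `(0,∞)` with `A > 0`, and `Φ(t) → L`,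
`Φ'(t) → 0` as `t → ∞`, then `Φ(0) − L ≤ −(A/2)·Φ'(0)`. -/
theorem entropy_differential_inequality
    (A L : ℝ) (hA : 0 < A) (Φ Φ' Φ'' : ℝ → ℝ)
    (hΦ' : ∀ t ∈ Ici (0 : ℝ), HasDerivWithinAt Φ (Φ' t) (Ici 0) t)
    (hΦ'cont : ContinuousOn Φ' (Ici 0))
    (hΦ'' : ∀ t ∈ Ioi (0 : ℝ), HasDerivAt Φ' (Φ'' t) t)
    (hineq : ∀ t ∈ Ioi (0 : ℝ), -2 * Φ' t ≤ A * Φ'' t)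
    (hlim : Tendsto Φ atTop (nhds L))
    (hlim' : Tendsto Φ' atTop (nhds 0)) :
    Φ 0 - L ≤ -(A / 2) * Φ' 0 := by
  set Ψ : ℝ → ℝ := fun t => Φ t + (A / 2) * Φ' t with hΨ
  have hderiv : ∀ t ∈ Ioi (0 : ℝ), HasDerivAt Ψ (Φ' t + (A / 2) * Φ'' t) t := by
    intro t ht
    have htmem : Ici (0 : ℝ) ∈ nhds t := Ici_mem_nhds ht
    have h1 : HasDerivAt Φ (Φ' t) t := (hΦ' t (mem_Ici.mpr (le_of_lt (mem_Ioi.mp ht)))).hasDerivAt htmem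
    exact h1.add ((hΦ'' t ht).const_mul (A / 2))
  have hΦcont : ContinuousOn Φ (Ici 0) := fun t ht => (hΦ' t ht).continuousWithinAt
  have hΨcont : ContinuousOn Ψ (Ici 0) := hΦcont.add (continuousOn_const.mul hΦ'cont)
  have hmono : MonotoneOn Ψ (Ici 0) := by
    apply monotoneOn_of_deriv_nonneg (convex_Ici 0) hΨcont
    · intro t ht
      rw [interior_Ici] at ht
      exact (hderiv t ht).differentiableAt.differentiableWithinAt
    · intro t ht
      rw [interior_Ici] at ht
      rw [(hderiv t ht).deriv]
      have := hineq t ht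
      nlinarith
  have hΨlim : Tendsto Ψ atTop (nhds L) := by
    have := hlim.add ((hlim'.const_mul (A / 2)))
    simpa using this
  have hle : Ψ 0 ≤ L := by
    apply ge_of_tendsto hΨlim
    filter_upwards [eventually_ge_atTop (0 : ℝ)] with t ht
    exact hmono (mem_Ici.mpr (le_refl 0)) (mem_Ici.mpr ht) ht
  simp only [hΨ] at hle
  linarith
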